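/- If H is obtained from a finite graph G by subdividing one edge, then B'(G) \le \lfloor 3 B'(H) / 2 \rfloor; equivalently, B'(H) \ge \lceil (2 B'(G) + \delta)/3 \rceil where \delta = 1 if B'(H) is odd and \delta = 0 if B'(H) is even. -/

import Mathlib

open SimpleGraph

/-- The edge-bandwidth of a finite simple graph: the minimum over injective integer
labelings of the edges of the maximum difference of labels on incident edges. -/
noncomputable def edgeBW {V : Type*} [Fintype V] (G : SimpleGraph V) : ℕ :=
  sInf {k : ℕ | ∃ f : G.edgeSet → ℤ, Function.Injective f ∧
    ∀ e e' : G.edgeSet, e ≠ e' → (∃ v, v ∈ (e : Sym2 V) ∧ v ∈ (e' : Sym2 V)) →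
      ((f e - f e').natAbs ≤ k)}

/-- The bandwidth of a finite simple graph: the minimum over injective integer
labelings of the vertices of the maximum difference of labels on adjacent vertices. -/
noncomputable def bw {V : Type*} [Fintype V] (G : SimpleGraph V) : ℕ :=
  sInf {k : ℕ | ∃ g : V → ℤ, Function.Injective g ∧
    ∀ u v, G.Adj u v → (g u - g v).natAbs ≤ k}
private def psi (a b t x : ℤ) : ℤ := if (a < x ∧ x ≤ t) ∨ b < x then x - 1 else x

private lemma psi_ne_t {a b t x : ℤ} (ht1 : a ≤ t) (ht2 : t ≤ b - 1)
    (hxa : x ≠ a) (hxb : x ≠ b) : psi a b t x ≠ t := by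
  unfold psi; split_ifs <;> omega

private lemma psi_inj {a b t x y : ℤ} (ht1 : a ≤ t) (ht2 : t ≤ b - 1)
    (hxa : x ≠ a) (hxb : x ≠ b) (hya : y ≠ a) (hyb : y ≠ b)
    (hxy : psi a b t x = psi a b t y) : x = y := by
  unfold psi at hxy; split_ifs at hxy <;> omega

private lemma psi_contract {k : ℕ} {a b t x y : ℤ}
    (hab : a < b)
    (ht1 : a ≤ t) (ht2 : t ≤ b - 1) (ht3 : t ≤ a + (k / 2 : ℕ))
    (ht4 : b ≤ t + (k / 2 : ℕ) + 1) (ht5 : a < t → ((k / 2 : ℕ) : ℤ) + 2 ≤ (k : ℤ))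
    (hxa : x ≠ a) (hxb : x ≠ b) (hya : y ≠ a) (hyb : y ≠ b)
    (hxy : (x - y).natAbs ≤ k) : (psi a b t x - psi a b t y).natAbs ≤ k + k / 2 := by
  unfold psi; split_ifs <;> omega

private lemma psi_close {k : ℕ} {a b t x : ℤ}
    (hab : a < b) (hdk : (a - b).natAbs ≤ k)
    (ht1 : a ≤ t) (ht2 : t ≤ b - 1) (ht3 : t ≤ a + (k / 2 : ℕ))
    (ht4 : b ≤ t + (k / 2 : ℕ) + 1)
    (hxa : x ≠ a) (hxb : x ≠ b)
    (hx : (x - a).natAbs ≤ k ∨ (x - b).natAbs ≤ k) :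
    (t - psi a b t x).natAbs ≤ k + k / 2 := by
  unfold psi; split_ifs <;> omega

private lemma t_exists {k : ℕ} {a b : ℤ} (hab : a < b) (hdk : (a - b).natAbs ≤ k) :
    ∃ t : ℤ, a ≤ t ∧ t ≤ b - 1 ∧ t ≤ a + (k / 2 : ℕ) ∧ b ≤ t + (k / 2 : ℕ) + 1 ∧
      (a < t → ((k / 2 : ℕ) : ℤ) + 2 ≤ (k : ℤ)) :=
  ⟨max a (b - (k / 2 : ℕ) - 1), by omega, by omega, by omega, by omega, by omega⟩

theorem edgeBW_le_subdivide {V : Type*} [Fintype V] (G : SimpleGraph V) (u v : V)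
    (huv : G.Adj u v) (H : SimpleGraph (Option V))
    (hH : H = SimpleGraph.fromEdgeSet
      ((Sym2.map Option.some '' (G.edgeSet \ {s(u, v)})) ∪
        {s(Option.some u, Option.none), s(Option.none, Option.some v)})) :
    edgeBW G ≤ 3 * edgeBW H / 2 := by
  classical
  set SH : Set ℕ := {k : ℕ | ∃ f : H.edgeSet → ℤ, Function.Injective f ∧
    ∀ e e' : H.edgeSet, e ≠ e' →
      (∃ w, w ∈ (e : Sym2 (Option V)) ∧ w ∈ (e' : Sym2 (Option V))) →
      ((f e - f e').natAbs ≤ k)} with hSH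
  have hne : SH.Nonempty := by
    obtain ⟨n, ⟨eqv⟩⟩ := Finite.exists_equiv_fin H.edgeSet
    refine ⟨n, fun e => ((eqv e : ℕ) : ℤ), ?_, ?_⟩
    · intro e e' hh
      dsimp only at hh
      exact eqv.injective (Fin.ext (by exact_mod_cast hh))
    · intro e e' _ _
      dsimp only
      have h1 := (eqv e).isLt
      have h2 := (eqv e').isLt
      omega
  have hk : edgeBW H ∈ SH := Nat.sInf_mem hne
  set k : ℕ := edgeBW H with hkdef
  obtain ⟨f, hfinj, hf⟩ := hk
  -- the two subdivision edges
  have he1 : s(Option.some u, Option.none) ∈ H.edgeSet := by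
    rw [hH, edgeSet_fromEdgeSet]
    exact ⟨Or.inr (Set.mem_insert _ _), by simp [Sym2.mk_isDiag_iff]⟩
  have he2 : s(Option.none, Option.some v) ∈ H.edgeSet := by
    rw [hH, edgeSet_fromEdgeSet]
    exact ⟨Or.inr (Set.mem_insert_iff.mpr (Or.inr rfl)), by simp [Sym2.mk_isDiag_iff]⟩
  set E1 : H.edgeSet := ⟨_, he1⟩ with hE1def
  set E2 : H.edgeSet := ⟨_, he2⟩ with hE2def
  have hι : ∀ e : G.edgeSet, (e : Sym2 V) ≠ s(u, v) →
      Sym2.map Option.some (e : Sym2 V) ∈ H.edgeSet := by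
    intro e he
    rw [hH, edgeSet_fromEdgeSet]
    refine ⟨Or.inl ⟨(e : Sym2 V), ⟨e.2, he⟩, rfl⟩, ?_⟩
    simp only [Sym2.diagSet, Set.mem_setOf_eq, Sym2.isDiag_map (Option.some_injective V)]
    exact G.not_isDiag_of_mem_edgeSet e.2
  have hne1 : ∀ (e : G.edgeSet) (he : (e : Sym2 V) ≠ s(u, v)),
      (⟨_, hι e he⟩ : H.edgeSet) ≠ E1 := by
    intro e he hcon
    have hcon' : Sym2.map Option.some (e : Sym2 V) = s(Option.some u, Option.none) :=
      congrArg Subtype.val hcon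
    have hmem : (Option.none : Option V) ∈ Sym2.map Option.some (e : Sym2 V) := by
      rw [hcon']; simp
    obtain ⟨w, -, hw⟩ := Sym2.mem_map.mp hmem
    exact Option.some_ne_none _ hw
  have hne2 : ∀ (e : G.edgeSet) (he : (e : Sym2 V) ≠ s(u, v)),
      (⟨_, hι e he⟩ : H.edgeSet) ≠ E2 := by
    intro e he hcon
    have hcon' : Sym2.map Option.some (e : Sym2 V) = s(Option.none, Option.some v) :=
      congrArg Subtype.val hcon
    have hmem : (Option.none : Option V) ∈ Sym2.map Option.some (e : Sym2 V) := by
      rw [hcon']; simp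
    obtain ⟨w, -, hw⟩ := Sym2.mem_map.mp hmem
    exact Option.some_ne_none _ hw
  have hE12 : E1 ≠ E2 := by
    intro hcon
    rw [hE1def, hE2def, Subtype.ext_iff] at hcon
    simp only [Sym2.eq_iff] at hcon
    rcases hcon with ⟨h1, -⟩ | ⟨h1, -⟩
    · exact Option.some_ne_none _ h1
    · exact huv.ne (Option.some_injective V h1)
  have hd : (f E1 - f E2).natAbs ≤ k := by
    refine hf E1 E2 hE12 ⟨Option.none, ?_, ?_⟩ <;> simp [hE1def, hE2def]
  have hfE : f E1 ≠ f E2 := fun h => hE12 (hfinj h)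
  set a : ℤ := min (f E1) (f E2) with hadef
  set b : ℤ := max (f E1) (f E2) with hbdef
  have hab : a < b := min_lt_max.mpr hfE
  have hdk : (a - b).natAbs ≤ k := by rw [hadef, hbdef]; omega
  have habE : (f E1 = a ∨ f E1 = b) ∧ (f E2 = a ∨ f E2 = b) := by
    rw [hadef, hbdef]; omega
  obtain ⟨t, ht1, ht2, ht3, ht4, ht5⟩ := t_exists hab hdk
  -- labels that arise from old edges avoid a and b
  have hxab : ∀ (e : G.edgeSet) (he : (e : Sym2 V) ≠ s(u, v)),
      f ⟨_, hι e he⟩ ≠ a ∧ f ⟨_, hι e he⟩ ≠ b := by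
    intro e he
    have h1 : f ⟨_, hι e he⟩ ≠ f E1 := fun h => hne1 e he (hfinj h)
    have h2 : f ⟨_, hι e he⟩ ≠ f E2 := fun h => hne2 e he (hfinj h)
    rw [hadef, hbdef]; omega
  have hKmem : k + k / 2 ∈ {K : ℕ | ∃ g : G.edgeSet → ℤ, Function.Injective g ∧
      ∀ e e' : G.edgeSet, e ≠ e' → (∃ w, w ∈ (e : Sym2 V) ∧ w ∈ (e' : Sym2 V)) →
        ((g e - g e').natAbs ≤ K)} := by
    refine ⟨fun e => if he : (e : Sym2 V) = s(u, v) then t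
      else psi a b t (f ⟨_, hι e he⟩), ?_, ?_⟩
    · intro e e' hgee
      dsimp only at hgee
      by_cases he : (e : Sym2 V) = s(u, v) <;>
        by_cases he' : (e' : Sym2 V) = s(u, v)
      · exact Subtype.ext (he.trans he'.symm)
      · rw [dif_pos he, dif_neg he'] at hgee
        exact absurd hgee.symm
          (psi_ne_t ht1 ht2 (hxab e' he').1 (hxab e' he').2)
      · rw [dif_neg he, dif_pos he'] at hgee
        exact absurd hgee (psi_ne_t ht1 ht2 (hxab e he).1 (hxab e he).2)
      · rw [dif_neg he, dif_neg he'] at hgee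
        have := psi_inj ht1 ht2 (hxab e he).1 (hxab e he).2
          (hxab e' he').1 (hxab e' he').2 hgee
        have h2 := hfinj this
        rw [Subtype.ext_iff] at h2
        exact Subtype.ext (Sym2.map.injective (Option.some_injective V) h2)
    · intro e e' hee ⟨w, hw, hw'⟩
      dsimp only
      by_cases he : (e : Sym2 V) = s(u, v) <;>
        by_cases he' : (e' : Sym2 V) = s(u, v)
      · exact absurd (Subtype.ext (he.trans he'.symm)) hee
      · rw [dif_pos he, dif_neg he']
        -- e = uv, e' other; w ∈ s(u,v)
        rw [he, Sym2.mem_iff] at hw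
        have hclose : (f ⟨_, hι e' he'⟩ - a).natAbs ≤ k ∨
            (f ⟨_, hι e' he'⟩ - b).natAbs ≤ k := by
          rcases hw with rfl | rfl
          · have := hf ⟨_, hι e' he'⟩ E1 (hne1 e' he')
              ⟨Option.some w, Sym2.mem_map.mpr ⟨w, hw', rfl⟩, by simp [hE1def]⟩
            rcases habE.1 with h | h <;> omega
          · have := hf ⟨_, hι e' he'⟩ E2 (hne2 e' he')
              ⟨Option.some w, Sym2.mem_map.mpr ⟨w, hw', rfl⟩, by simp [hE2def]⟩
            rcases habE.2 with h | h <;> omega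
        exact psi_close hab hdk ht1 ht2 ht3 ht4
          (hxab e' he').1 (hxab e' he').2 hclose
      · rw [dif_neg he, dif_pos he']
        rw [he', Sym2.mem_iff] at hw'
        have hclose : (f ⟨_, hι e he⟩ - a).natAbs ≤ k ∨
            (f ⟨_, hι e he⟩ - b).natAbs ≤ k := by
          rcases hw' with rfl | rfl
          · have := hf ⟨_, hι e he⟩ E1 (hne1 e he)
              ⟨Option.some w, Sym2.mem_map.mpr ⟨w, hw, rfl⟩, by simp [hE1def]⟩
            rcases habE.1 with h | h <;> omega
          · have := hf ⟨_, hι e he⟩ E2 (hne2 e he)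
              ⟨Option.some w, Sym2.mem_map.mpr ⟨w, hw, rfl⟩, by simp [hE2def]⟩
            rcases habE.2 with h | h <;> omega
        have := psi_close hab hdk ht1 ht2 ht3 ht4
          (hxab e he).1 (hxab e he).2 hclose
        omega
      · rw [dif_neg he, dif_neg he']
        have hneH : (⟨_, hι e he⟩ : H.edgeSet) ≠ ⟨_, hι e' he'⟩ := by
          intro hcon
          rw [Subtype.ext_iff] at hcon
          exact hee (Subtype.ext
            (Sym2.map.injective (Option.some_injective V) hcon))
        have := hf ⟨_, hι e he⟩ ⟨_, hι e' he'⟩ hneH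
          ⟨Option.some w, Sym2.mem_map.mpr ⟨w, hw, rfl⟩,
            Sym2.mem_map.mpr ⟨w, hw', rfl⟩⟩
        exact psi_contract hab ht1 ht2 ht3 ht4 ht5
          (hxab e he).1 (hxab e he).2 (hxab e' he').1 (hxab e' he').2 this
  have hfin : edgeBW G ≤ k + k / 2 := Nat.sInf_le hKmem
  omega
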